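/- arXiv:2004.00850 — 8 statements merged into one kernel-verified Lean document; each statement's English description precedes it below -/
import Mathlib

section
/- Let M be a symmetric r×r matrix with entries in the ring of real multivariate polynomials in n variables. If the scalar polynomial yᵀ M(x) y in n + r variables (x₁,…,xₙ, y₁,…,y_r) is a sum of squares of real polynomials in n + r variables, then M is an SOS matrix polynomial: there exist matrix polynomials M₁, …, M_k of size r with M = Σᵢ Mᵢᵀ Mᵢ. -/
open Matrix MvPolynomial

/-- sum of squares of real mv-polynomials is zero iff each is zero -/
lemma aux_sos_eq_zero {σ : Type*} {s : ℕ} (c : Fin s → MvPolynomial σ ℝ)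
    (h : ∑ j, (c j) ^ 2 = 0) (j : Fin s) : c j = 0 := by
  have : c j = (0 : MvPolynomial σ ℝ) := by
    apply MvPolynomial.funext
    intro x
    have hx : ∑ j, (MvPolynomial.eval x (c j)) ^ 2 = 0 := by
      have := congrArg (MvPolynomial.eval x) h
      simpa using this
    have hj := (Finset.sum_eq_zero_iff_of_nonneg (fun i _ => sq_nonneg _)).mp hx j
      (Finset.mem_univ j)
    have : MvPolynomial.eval x (c j) = 0 := by
      have := pow_eq_zero_iff (n := 2) (by norm_num) |>.mp hj
      exact this
    simpa using this
  exact this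

lemma aux_sum_eq_one_single {r : ℕ} (u : Fin r →₀ ℕ) (h : ∑ b, u b = 1) :
    ∃ b, u = Finsupp.single b 1 := by
  obtain ⟨b, hb⟩ : ∃ b, u b ≠ 0 := by
    by_contra hc
    push_neg at hc
    simp [hc] at h
  refine ⟨b, ?_⟩
  have h1 : u b + ∑ a ∈ Finset.univ.erase b, u a = 1 := by
    rw [Finset.add_sum_erase _ _ (Finset.mem_univ b)]
    exact h
  have hub : u b = 1 := by omega
  have hS : ∑ a ∈ Finset.univ.erase b, u a = 0 := by omega
  have hrest : ∀ a : Fin r, a ≠ b → u a = 0 := by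
    intro a ha
    exact Finset.sum_eq_zero_iff.mp hS a (by simp [ha])
  ext a
  by_cases hab : a = b
  · subst hab; simp [hub]
  · simp [Finsupp.single_apply, Ne.symm hab, hrest a hab]

lemma aux_pair_eq' {r : ℕ} (a b a' b' : Fin r) :
    Finsupp.single a 1 + Finsupp.single b 1 = Finsupp.single a' 1 + Finsupp.single b' 1 ↔
      (a = a' ∧ b = b') ∨ (a = b' ∧ b = a') := by
  constructor
  · intro h
    have hval := DFunLike.congr_fun h a
    simp only [Finsupp.add_apply, Finsupp.single_apply] at hval
    by_cases h1 : a' = a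
    · subst h1
      have := add_left_cancel h
      left
      exact ⟨rfl, (Finsupp.single_left_inj one_ne_zero).mp this⟩
    · by_cases h2 : b' = a
      · subst h2
        rw [add_comm (Finsupp.single a' 1)] at h
        have := add_left_cancel h
        right
        exact ⟨rfl, (Finsupp.single_left_inj one_ne_zero).mp this⟩
      · exfalso
        simp [h1, h2] at hval
  · rintro (⟨rfl, rfl⟩ | ⟨rfl, rfl⟩)
    · rfl
    · exact add_comm _ _

lemma aux_pair_ne_zero {r : ℕ} (a b : Fin r) :
    Finsupp.single a 1 + Finsupp.single b 1 ≠ 0 := by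
  intro h
  have := DFunLike.congr_fun h a
  simp only [Finsupp.add_apply, Finsupp.single_apply, Finsupp.coe_zero, Pi.zero_apply] at this
  simp at this

lemma aux_XCX {r : ℕ} {A : Type*} [CommSemiring A] (a b : Fin r) (m : A) :
    (X a : MvPolynomial (Fin r) A) * C m * X b
      = monomial (Finsupp.single a 1 + Finsupp.single b 1) m := by
  rw [X, X, C_apply, monomial_mul, monomial_mul]
  simp

lemma aux_coeff_double {r : ℕ} {A : Type*} [CommSemiring A] (N : Fin r → Fin r → A)
    (a0 b0 : Fin r) :
    coeff (Finsupp.single a0 1 + Finsupp.single b0 1)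
        (∑ a, ∑ b, monomial (Finsupp.single a 1 + Finsupp.single b 1) (N a b))
      = if a0 = b0 then N a0 a0 else N a0 b0 + N b0 a0 := by
  have key : ∀ a b : Fin r,
      (if Finsupp.single a 1 + Finsupp.single b 1
          = Finsupp.single a0 1 + Finsupp.single b0 1 then N a b else 0)
        = (if a = a0 then if b = b0 then N a b else 0 else 0)
          + (if a0 = b0 then 0 else if a = b0 then if b = a0 then N a b else 0 else 0) := by
    intro a b
    simp only [aux_pair_eq']
    by_cases h1 : a = a0 <;> by_cases h2 : b = b0 <;> by_cases h3 : a = b0 <;>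
      by_cases h4 : b = a0 <;> subst_eqs <;> simp_all
  simp only [coeff_sum, coeff_monomial, key, Finset.sum_add_distrib]
  have e1 : (∑ a, ∑ b, if a = a0 then if b = b0 then N a b else 0 else 0) = N a0 b0 := by
    have inner : ∀ a : Fin r,
        (∑ b, if a = a0 then if b = b0 then N a b else 0 else 0)
          = if a = a0 then N a b0 else 0 := by
      intro a
      split_ifs with h
      · simp [Finset.sum_ite_eq']
      · simp
    rw [Finset.sum_congr rfl fun a _ => inner a]
    simp [Finset.sum_ite_eq']
  have e2 : (∑ a, ∑ b, if a0 = b0 then 0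
        else if a = b0 then if b = a0 then N a b else 0 else 0)
      = if a0 = b0 then 0 else N b0 a0 := by
    split_ifs with h
    · simp [h]
    · have inner : ∀ a : Fin r,
          (∑ b, if a = b0 then if b = a0 then N a b else 0 else 0)
            = if a = b0 then N a a0 else 0 := by
        intro a
        split_ifs with h
        · simp [Finset.sum_ite_eq']
        · simp
      rw [Finset.sum_congr rfl fun a _ => inner a]
      simp [Finset.sum_ite_eq']
  rw [e1, e2]
  split_ifs with h
  · subst h; simp
  · rfl


/-- If `M` is a symmetric `r × r` matrix of real multivariate
polynomials in `n` variables and the scalar polynomial `yᵀ M(x) y` in the `n + r`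
variables `Fin n ⊕ Fin r` is a sum of squares of polynomials, then `M` is an SOS
matrix polynomial: `M = ∑ i, (Mᵢ)ᵀ * Mᵢ` for some matrix polynomials `Mᵢ`. -/
theorem quadratic_form_sos_implies_sos_matrix_polynomial
    (n r : ℕ)
    (M : Matrix (Fin r) (Fin r) (MvPolynomial (Fin n) ℝ))
    (hsymm : Mᵀ = M)
    (hsos : ∃ (s : ℕ) (p : Fin s → MvPolynomial (Fin n ⊕ Fin r) ℝ),
      (∑ a : Fin r, ∑ b : Fin r,
          MvPolynomial.X (Sum.inr a) *
            MvPolynomial.rename Sum.inl (M a b) * MvPolynomial.X (Sum.inr b))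
        = ∑ j, (p j) ^ 2) :
    ∃ (k : ℕ) (Ms : Fin k → Matrix (Fin r) (Fin r) (MvPolynomial (Fin n) ℝ)),
      M = ∑ i, (Ms i)ᵀ * Ms i := by
  classical
  obtain ⟨s, p, hp⟩ := hsos
  let E : MvPolynomial (Fin n ⊕ Fin r) ℝ ≃ₐ[ℝ] MvPolynomial (Fin r) (MvPolynomial (Fin n) ℝ) :=
    (renameEquiv ℝ (Equiv.sumComm (Fin n) (Fin r))).trans (sumAlgEquiv ℝ (Fin r) (Fin n))
  have hEX : ∀ a : Fin r, E (X (Sum.inr a)) = X a := by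
    intro a
    show (sumAlgEquiv ℝ (Fin r) (Fin n)) (rename (Equiv.sumComm (Fin n) (Fin r)) (X (Sum.inr a)))
      = X a
    rw [rename_X]
    exact sumAlgEquiv_X_inl ℝ (Fin r) (Fin n) a
  have hEC : ∀ m : MvPolynomial (Fin n) ℝ, E (rename Sum.inl m) = C m := by
    intro m
    show (sumAlgEquiv ℝ (Fin r) (Fin n)) (rename (Equiv.sumComm (Fin n) (Fin r))
      (rename Sum.inl m)) = C m
    rw [rename_rename]
    have h1 : (⇑(Equiv.sumComm (Fin n) (Fin r)) ∘ Sum.inl) = (Sum.inr : Fin n → Fin r ⊕ Fin n) :=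
      funext fun i => rfl
    rw [h1]
    have h2 := DFunLike.congr_fun (sumAlgEquiv_comp_rename_inr ℝ (Fin r) (Fin n)) m
    simpa [algebraMap_eq] using h2
  -- transported polynomials
  set P : Fin s → MvPolynomial (Fin r) (MvPolynomial (Fin n) ℝ) := fun j => E (p j) with hP
  -- main equation in the y-outer ring
  have hmain : (∑ a, ∑ b, monomial (Finsupp.single a 1 + Finsupp.single b 1) (M a b))
      = ∑ j, (P j) ^ 2 := by
    have h := congrArg E hp
    simp only [_root_.map_sum, _root_.map_mul, map_pow, hEX, hEC, aux_XCX] at h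
    exact h
  -- constant coefficients vanish
  have hc0 : ∀ j, constantCoeff (P j) = 0 := by
    apply aux_sos_eq_zero (fun j => constantCoeff (P j))
    have := congrArg constantCoeff hmain
    simp only [_root_.map_sum, map_pow] at this
    rw [← this]
    apply Finset.sum_eq_zero
    intro a _
    apply Finset.sum_eq_zero
    intro b _
    simp [constantCoeff_monomial, aux_pair_ne_zero a b]
  have hc0' : ∀ j, coeff 0 (P j) = 0 := hc0
  -- the linear parts
  set L : Fin s → MvPolynomial (Fin r) (MvPolynomial (Fin n) ℝ) :=
    fun j => ∑ b, monomial (Finsupp.single b 1) (coeff (Finsupp.single b 1) (P j)) with hL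
  have hLsingle : ∀ j b0, coeff (Finsupp.single b0 1) (L j)
      = coeff (Finsupp.single b0 1) (P j) := by
    intro j b0
    rw [hL]
    simp only [coeff_sum, coeff_monomial]
    rw [Finset.sum_congr rfl fun b _ =>
      if_congr (Finsupp.single_left_inj one_ne_zero) rfl rfl]
    simp [Finset.sum_ite_eq']
  have hLother : ∀ j v, (∀ b : Fin r, Finsupp.single b 1 ≠ v) → coeff v (L j) = 0 := by
    intro j v hv
    rw [hL]
    simp only [coeff_sum, coeff_monomial]
    exact Finset.sum_eq_zero fun b _ => if_neg (hv b)
  have hL0 : ∀ j, coeff 0 (L j) = 0 := fun j =>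
    hLother j 0 fun b => fun h => one_ne_zero (Finsupp.single_eq_zero.mp h)
  -- degree bookkeeping
  have hD0 : ∀ v : Fin r →₀ ℕ, (∑ b, v b) = 0 → v = 0 := by
    intro v hv
    ext b
    exact Finset.sum_eq_zero_iff.mp hv b (Finset.mem_univ b)
  have hDadd : ∀ v w : Fin r →₀ ℕ, (∑ b, (v + w) b) = (∑ b, v b) + (∑ b, w b) := by
    intro v w
    simp [Finsupp.add_apply, Finset.sum_add_distrib]
  have hDsingle : ∀ b : Fin r, (∑ b', (Finsupp.single b 1) b') = 1 := by
    intro b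
    simp [Finsupp.single_apply, Finset.sum_ite_eq]
  have hDpair : ∀ a b : Fin r,
      (∑ b', ((Finsupp.single a 1 + Finsupp.single b 1 : Fin r →₀ ℕ)) b') = 2 := by
    intro a b
    rw [hDadd, hDsingle, hDsingle]
  -- key degree-2 comparison
  have hPL : ∀ j u, (∑ b, u b) = 2 → coeff u ((P j) ^ 2) = coeff u ((L j) ^ 2) := by
    intro j u hu
    rw [sq, sq, coeff_mul, coeff_mul]
    apply Finset.sum_congr rfl
    rintro ⟨v, w⟩ hvw
    have hsum : v + w = u := Finset.HasAntidiagonal.mem_antidiagonal.mp hvw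
    have hd2 : (∑ b, v b) + (∑ b, w b) = 2 := by rw [← hDadd v w, hsum]; exact hu
    by_cases hv1 : (∑ b, v b) = 1
    · have hw1 : (∑ b, w b) = 1 := by omega
      obtain ⟨bv, rfl⟩ := aux_sum_eq_one_single v hv1
      obtain ⟨bw, rfl⟩ := aux_sum_eq_one_single w hw1
      rw [hLsingle j bv, hLsingle j bw]
    · have : (∑ b, v b) = 0 ∨ (∑ b, w b) = 0 := by omega
      rcases this with hz | hz
      · obtain rfl := hD0 v hz
        simp [hc0' j, hL0 j]
      · obtain rfl := hD0 w hz
        simp [hc0' j, hL0 j]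
  -- Q = sum of squares of linear parts
  have hQL : (∑ a, ∑ b, monomial (Finsupp.single a 1 + Finsupp.single b 1) (M a b))
      = ∑ j, (L j) ^ 2 := by
    apply MvPolynomial.ext
    intro u
    by_cases hu : (∑ b, u b) = 2
    · rw [hmain]
      simp only [coeff_sum]
      exact Finset.sum_congr rfl fun j _ => hPL j u hu
    · have hQ0 : coeff u (∑ a, ∑ b,
          monomial (Finsupp.single a 1 + Finsupp.single b 1) (M a b)) = 0 := by
        simp only [coeff_sum, coeff_monomial]
        apply Finset.sum_eq_zero; intro a _
        apply Finset.sum_eq_zero; intro b _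
        rw [if_neg]
        intro h
        rw [← h] at hu
        exact hu (hDpair a b)
      have hL2 : ∀ j, coeff u ((L j) ^ 2) = 0 := by
        intro j
        rw [sq, coeff_mul]
        apply Finset.sum_eq_zero
        rintro ⟨v, w⟩ hvw
        have hsum : v + w = u := Finset.HasAntidiagonal.mem_antidiagonal.mp hvw
        by_cases hv : ∃ b : Fin r, Finsupp.single b 1 = v
        · by_cases hw : ∃ b : Fin r, Finsupp.single b 1 = w
          · exfalso
            obtain ⟨bv, rfl⟩ := hv
            obtain ⟨bw, rfl⟩ := hw
            exact hu (by rw [← hsum]; exact hDpair bv bw)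
          · push_neg at hw
            rw [hLother j w hw, mul_zero]
        · push_neg at hv
          rw [hLother j v hv, zero_mul]
      rw [hQ0]
      simp only [coeff_sum]
      exact (Finset.sum_eq_zero fun j _ => hL2 j).symm
  -- expand squares of linear parts
  have hexp : (∑ j, (L j) ^ 2)
      = ∑ a, ∑ b, monomial (Finsupp.single a 1 + Finsupp.single b 1)
          (∑ j, coeff (Finsupp.single a 1) (P j) * coeff (Finsupp.single b 1) (P j)) := by
    have h1 : ∀ j, (L j) ^ 2 = ∑ a, ∑ b,
        monomial (Finsupp.single a 1 + Finsupp.single b 1)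
          (coeff (Finsupp.single a 1) (P j) * coeff (Finsupp.single b 1) (P j)) := by
      intro j
      rw [sq, hL, Finset.sum_mul_sum]
      apply Finset.sum_congr rfl; intro a _
      apply Finset.sum_congr rfl; intro b _
      rw [monomial_mul]
    rw [Finset.sum_congr rfl fun j _ => h1 j]
    rw [Finset.sum_comm]
    apply Finset.sum_congr rfl; intro a _
    rw [Finset.sum_comm]
    apply Finset.sum_congr rfl; intro b _
    rw [← _root_.map_sum]
  -- extract entries
  have hMS : ∀ a b : Fin r, M a b
      = ∑ j, coeff (Finsupp.single a 1) (P j) * coeff (Finsupp.single b 1) (P j) := by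
    have heq := hQL.trans hexp
    intro a b
    have h1 := congrArg (coeff (Finsupp.single a 1 + Finsupp.single b 1)) heq
    rw [aux_coeff_double, aux_coeff_double (N := M)] at h1
    by_cases hab : a = b
    · subst hab
      simpa using h1
    · rw [if_neg hab, if_neg hab] at h1
      have hM : M b a = M a b := by
        have h := congrFun (congrFun hsymm a) b
        simpa using h
      have hS : (∑ j, coeff (Finsupp.single b 1) (P j) * coeff (Finsupp.single a 1) (P j))
          = ∑ j, coeff (Finsupp.single a 1) (P j) * coeff (Finsupp.single b 1) (P j) :=
        Finset.sum_congr rfl fun j _ => mul_comm _ _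
      rw [hM, hS] at h1
      have h2 : (2 : MvPolynomial (Fin n) ℝ) * M a b
          = 2 * ∑ j, coeff (Finsupp.single a 1) (P j) * coeff (Finsupp.single b 1) (P j) := by
        linear_combination h1
      exact mul_left_cancel₀ two_ne_zero h2
  -- build the matrices
  refine ⟨s, fun j => Matrix.of fun c b => if (c : ℕ) = 0 then
    coeff (Finsupp.single b 1) (P j) else 0, ?_⟩
  refine Matrix.ext fun a b => ?_
  have hr : 0 < r := a.pos
  rw [Matrix.sum_apply]
  rw [hMS a b]
  apply Finset.sum_congr rfl
  intro j _
  rw [Matrix.mul_apply]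
  have : ∀ c : Fin r, ((c : ℕ) = 0) = (c = ⟨0, hr⟩) := by
    intro c
    simp [Fin.ext_iff]
  simp only [Matrix.transpose_apply, Matrix.of_apply, this, ite_mul, mul_ite,
    zero_mul, mul_zero]
  simp [Finset.sum_ite_eq']
end

section
/- Let A be an n×n real matrix, B an n×m real matrix, U₀ an m×T real matrix, and X₀, X₁ n×T real matrices satisfying X₁ = A · X₀ + B · U₀. Suppose G is a T×n real matrix with X₀ · G = Iₙ, and set K := U₀ · G. Then A + B · K = X₁ · G. -/
open Matrix

/-- If the data matrices satisfy `X₁ = A * X₀ + B * U₀`, `G` satisfies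
`X₀ * G = I`, and `K := U₀ * G`, then `A + B * K = X₁ * G`. -/
theorem data_based_closed_loop_matrix_identity
    (n m T : ℕ)
    (A : Matrix (Fin n) (Fin n) ℝ) (B : Matrix (Fin n) (Fin m) ℝ)
    (U₀ : Matrix (Fin m) (Fin T) ℝ)
    (X₀ X₁ : Matrix (Fin n) (Fin T) ℝ)
    (hdata : X₁ = A * X₀ + B * U₀)
    (G : Matrix (Fin T) (Fin n) ℝ)
    (hG : X₀ * G = 1)
    (K : Matrix (Fin m) (Fin n) ℝ)
    (hK : K = U₀ * G) :
    A + B * K = X₁ * G := by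
  subst hdata hK
  rw [Matrix.add_mul, Matrix.mul_assoc, Matrix.mul_assoc, hG, Matrix.mul_one]
end

section
/- Let A be an n×n real matrix, B an n×m real matrix, U₀ an m×T real matrix, and X₀, X₁ n×T real matrices satisfying X₁ = A · X₀ + B · U₀. Suppose G is a T×n real matrix with X₀ · G = Iₙ and set K := U₀ · G. Then every sequence x : ℕ → ℝⁿ satisfying the closed-loop recursion x(k+1) = A x(k) + B (K x(k)) for all k also satisfies the data-based representation x(k+1) = X₁ · G · x(k) for all k. -/
open Matrix

/-- Data-based representation of the closed-loop system: if
`X₁ = A * X₀ + B * U₀`, `X₀ * G = 1` and `K := U₀ * G`, then every sequence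
satisfying the closed-loop recursion `x(k+1) = A x(k) + B (K x(k))` also satisfies
`x(k+1) = X₁ G x(k)`. -/
theorem data_based_closed_loop_representation
    (n m T : ℕ)
    (A : Matrix (Fin n) (Fin n) ℝ) (B : Matrix (Fin n) (Fin m) ℝ)
    (U₀ : Matrix (Fin m) (Fin T) ℝ)
    (X₀ X₁ : Matrix (Fin n) (Fin T) ℝ)
    (hdata : X₁ = A * X₀ + B * U₀)
    (G : Matrix (Fin T) (Fin n) ℝ)
    (hG : X₀ * G = 1)
    (K : Matrix (Fin m) (Fin n) ℝ)
    (hK : K = U₀ * G)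
    (x : ℕ → Fin n → ℝ)
    (hx : ∀ k, x (k + 1) = A.mulVec (x k) + B.mulVec (K.mulVec (x k))) :
    ∀ k, x (k + 1) = (X₁ * G).mulVec (x k) := by
  intro k
  have : X₁ * G = A + B * K := by
    rw [hdata, hK, Matrix.add_mul, Matrix.mul_assoc, Matrix.mul_assoc, hG, Matrix.mul_one]
  rw [this, hx k, add_mulVec, mulVec_mulVec, hK, ← mulVec_mulVec]
end

section
/- Let A be an n×N real matrix, B an n×m real matrix, U₀ an m×T real matrix, Z₀ an N×T real matrix, and X₁ := A · Z₀ + B · U₀. Let G be a T×N matrix with entries in the ring of real multivariate polynomials in n variables such that Z₀ · G = I_N (as matrices of polynomials, with the real constants embedded as constant polynomials), and set F := U₀ · G. Then, as N-vectors of polynomials, (A + B · F) · Z = X₁ · G · Z for every N-vector Z of polynomials in the n variables; in particular, for every x ∈ ℝⁿ and every v ∈ ℝᴺ, (A + B · F(x)) v = X₁ · G(x) · v, where F(x) and G(x) denote entrywise evaluation at x. -/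
open Matrix

/-- Data-dependent representation of the closed-loop polynomial
system.  With data satisfying `X₁ = A Z₀ + B U₀`, a polynomial matrix `G` with
`Z₀ G = I_N` (real constants embedded as constant polynomials) and
`F := U₀ G`, we have `(A + B F) Z = X₁ G Z` for every `N`-vector `Z` of
polynomials, and in particular `(A + B F(x)) v = X₁ G(x) v` for every `x ∈ ℝⁿ`
and `v ∈ ℝᴺ`, where `F(x)`, `G(x)` denote entrywise evaluation at `x`. -/
theorem data_dependent_representation_polynomial_system
    (n N m T : ℕ)
    (A : Matrix (Fin n) (Fin N) ℝ) (B : Matrix (Fin n) (Fin m) ℝ)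
    (U₀ : Matrix (Fin m) (Fin T) ℝ) (Z₀ : Matrix (Fin N) (Fin T) ℝ)
    (X₁ : Matrix (Fin n) (Fin T) ℝ)
    (hX₁ : X₁ = A * Z₀ + B * U₀)
    (G : Matrix (Fin T) (Fin N) (MvPolynomial (Fin n) ℝ))
    (hG : Z₀.map (MvPolynomial.C : ℝ → MvPolynomial (Fin n) ℝ) * G = 1)
    (F : Matrix (Fin m) (Fin N) (MvPolynomial (Fin n) ℝ))
    (hF : F = U₀.map (MvPolynomial.C : ℝ → MvPolynomial (Fin n) ℝ) * G) :
    (∀ Z : Fin N → MvPolynomial (Fin n) ℝ,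
      (A.map (MvPolynomial.C : ℝ → MvPolynomial (Fin n) ℝ) + B.map (MvPolynomial.C : ℝ → MvPolynomial (Fin n) ℝ) * F).mulVec Z
        = (X₁.map (MvPolynomial.C : ℝ → MvPolynomial (Fin n) ℝ) * G).mulVec Z) ∧
    (∀ (x : Fin n → ℝ) (v : Fin N → ℝ),
      (A + B * F.map (MvPolynomial.eval x)).mulVec v
        = (X₁ * G.map (MvPolynomial.eval x)).mulVec v) := by
  have key : A.map (MvPolynomial.C : ℝ → MvPolynomial (Fin n) ℝ)
      + B.map (MvPolynomial.C : ℝ → MvPolynomial (Fin n) ℝ) * F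
      = X₁.map (MvPolynomial.C : ℝ → MvPolynomial (Fin n) ℝ) * G := by
    subst hX₁ hF
    rw [Matrix.map_add _ (fun a b => map_add (MvPolynomial.C : ℝ →+* _) a b), Matrix.map_mul, Matrix.map_mul]
    rw [Matrix.add_mul, Matrix.mul_assoc, Matrix.mul_assoc, hG, Matrix.mul_one]
  constructor
  · intro Z; rw [key]
  · intro x v
    have key2 := congrArg (fun M : Matrix (Fin n) (Fin N) (MvPolynomial (Fin n) ℝ) =>
      M.map (MvPolynomial.eval x)) key
    simp only [Matrix.map_add (f := ⇑(MvPolynomial.eval x)) (fun a b => map_add _ a b),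
      Matrix.map_mul, Matrix.map_map] at key2
    have hA : A.map (⇑(MvPolynomial.eval x) ∘ ⇑(MvPolynomial.C : ℝ →+* _)) = A := by
      ext i j; simp
    have hX : X₁.map (⇑(MvPolynomial.eval x) ∘ ⇑(MvPolynomial.C : ℝ →+* _)) = X₁ := by
      ext i j; simp
    rw [hA, hX] at key2
    have hB : B.map (⇑(MvPolynomial.eval x) ∘ ⇑(MvPolynomial.C : ℝ →+* _)) = B := by
      ext i j; simp
    rw [hB] at key2
    rw [key2]
end

section
/- Let A be an n×N real matrix, B an n×m real matrix, U₀ an m×T real matrix, Z₀ an N×T real matrix, and X₁ := A · Z₀ + B · U₀. Let Z : ℝⁿ → ℝᴺ be differentiable with Jacobian J(ξ) at ξ, let P be a symmetric positive definite N×N real matrix, let Y : ℝⁿ → ℝ^{T×N} satisfy Z₀ · Y(ξ) = P for all ξ, and let ε : ℝⁿ → ℝ with ε(ξ) ≥ 0 for all ξ. Assume that for every ξ ∈ ℝⁿ the matrix −[J(ξ) · X₁ · Y(ξ) + (J(ξ) · X₁ · Y(ξ))ᵀ] − ε(ξ) · I_N is positive semidefinite. Let x : ℝ → ℝⁿ be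 differentiable and satisfy the closed-loop equation x'(t) = (A + B · F(x(t))) Z(x(t)) for all t, where F(ξ) := U₀ · Y(ξ) · P⁻¹. Then the function t ↦ Z(x(t))ᵀ P⁻¹ Z(x(t)) is nonincreasing (antitone) on ℝ. -/
open Matrix

private lemma hasDerivAt_dotProd {N : ℕ} {f g : ℝ → Fin N → ℝ}
    {f' g' : Fin N → ℝ} {t : ℝ}
    (hf : HasDerivAt f f' t) (hg : HasDerivAt g g' t) :
    HasDerivAt (fun s => f s ⬝ᵥ g s) (f' ⬝ᵥ g t + f t ⬝ᵥ g') t := by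
  simp only [dotProduct, ← Finset.sum_add_distrib]
  exact HasDerivAt.fun_sum fun i _ =>
    ((hasDerivAt_pi.mp hf i).mul (hasDerivAt_pi.mp hg i))

private lemma hasDerivAt_mulVec {N M : ℕ} {f : ℝ → Fin M → ℝ}
    {f' : Fin M → ℝ} {t : ℝ} (A : Matrix (Fin N) (Fin M) ℝ)
    (hf : HasDerivAt f f' t) :
    HasDerivAt (fun s => A.mulVec (f s)) (A.mulVec f') t := by
  refine hasDerivAt_pi.mpr fun i => ?_
  simp only [Matrix.mulVec, dotProduct]
  exact HasDerivAt.fun_sum fun j _ => (hasDerivAt_pi.mp hf j).const_mul _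

/-- Data-driven stabilization (stability part). -/
theorem data_driven_stabilization_lyapunov_nonincreasing
    (n N m T : ℕ)
    (A : Matrix (Fin n) (Fin N) ℝ) (B : Matrix (Fin n) (Fin m) ℝ)
    (U₀ : Matrix (Fin m) (Fin T) ℝ) (Z₀ : Matrix (Fin N) (Fin T) ℝ)
    (X₁ : Matrix (Fin n) (Fin T) ℝ)
    (hX₁ : X₁ = A * Z₀ + B * U₀)
    (Z : (Fin n → ℝ) → (Fin N → ℝ))
    (hZ : Differentiable ℝ Z)
    (J : (Fin n → ℝ) → Matrix (Fin N) (Fin n) ℝ)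
    (hJ : ∀ ξ, J ξ = LinearMap.toMatrix' (fderiv ℝ Z ξ).toLinearMap)
    (P : Matrix (Fin N) (Fin N) ℝ)
    (hP : P.PosDef)
    (Y : (Fin n → ℝ) → Matrix (Fin T) (Fin N) ℝ)
    (hY : ∀ ξ, Z₀ * Y ξ = P)
    (ε : (Fin n → ℝ) → ℝ)
    (hε : ∀ ξ, 0 ≤ ε ξ)
    (hQ : ∀ ξ, (-(J ξ * X₁ * Y ξ + (J ξ * X₁ * Y ξ)ᵀ)
        - ε ξ • (1 : Matrix (Fin N) (Fin N) ℝ)).PosSemidef)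
    (F : (Fin n → ℝ) → Matrix (Fin m) (Fin N) ℝ)
    (hF : ∀ ξ, F ξ = U₀ * Y ξ * P⁻¹)
    (x : ℝ → (Fin n → ℝ))
    (hx : Differentiable ℝ x)
    (hode : ∀ t, deriv x t = (A + B * F (x t)).mulVec (Z (x t))) :
    Antitone (fun t => Z (x t) ⬝ᵥ P⁻¹.mulVec (Z (x t))) := by
  -- basic facts about P
  have hPunit : IsUnit P.det := isUnit_iff_ne_zero.mpr (ne_of_gt hP.det_pos)
  have hPsymm : Pᵀ = P := hP.isHermitian.eq
  have hPinv_symm : P⁻¹ᵀ = P⁻¹ := by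
    rw [Matrix.transpose_nonsing_inv, hPsymm]
  -- the closed loop matrix
  have hM : ∀ ξ, X₁ * Y ξ * P⁻¹ = A + B * F ξ := by
    intro ξ
    rw [hX₁, hF, Matrix.add_mul, Matrix.add_mul, Matrix.mul_assoc A, hY,
      Matrix.mul_assoc A P, Matrix.mul_nonsing_inv P hPunit, Matrix.mul_one,
      Matrix.mul_assoc B, Matrix.mul_assoc B, Matrix.mul_assoc (U₀)]
  -- the fderiv of Z acts by mulVec of J
  have hfd : ∀ ξ v, (fderiv ℝ Z ξ) v = (J ξ).mulVec v := by
    intro ξ v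
    rw [hJ, ← Matrix.toLin'_apply, Matrix.toLin'_toMatrix']
    rfl
  -- derivative of Z ∘ x
  have hg : ∀ t, HasDerivAt (fun s => Z (x s))
      ((J (x t) * X₁ * Y (x t)).mulVec (P⁻¹.mulVec (Z (x t)))) t := by
    intro t
    have h1 : HasDerivAt (fun s => Z (x s)) ((fderiv ℝ Z (x t)) (deriv x t)) t :=
      (hZ (x t)).hasFDerivAt.comp_hasDerivAt t (hx t).hasDerivAt
    convert h1 using 1
    rw [hfd, hode, ← hM (x t)]
    simp [← Matrix.mulVec_mulVec, Matrix.mul_assoc]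
  -- derivative of the Lyapunov function and its sign
  have hV : ∀ t, HasDerivAt (fun s => Z (x s) ⬝ᵥ P⁻¹.mulVec (Z (x s)))
      ((P⁻¹.mulVec (Z (x t))) ⬝ᵥ
        (((J (x t) * X₁ * Y (x t)) + (J (x t) * X₁ * Y (x t))ᵀ).mulVec
          (P⁻¹.mulVec (Z (x t))))) t := by
    intro t
    set M := J (x t) * X₁ * Y (x t) with hMdef
    set v := P⁻¹.mulVec (Z (x t)) with hvdef
    have h := hasDerivAt_dotProd (hg t) (hasDerivAt_mulVec P⁻¹ (hg t))
    convert h using 1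
    rw [Matrix.add_mulVec, dotProduct_add, add_comm]
    congr 1
    · rw [Matrix.dotProduct_mulVec, Matrix.vecMul_transpose]
    · rw [Matrix.dotProduct_mulVec (Z (x t)) P⁻¹, ← Matrix.mulVec_transpose,
        hPinv_symm, ← hvdef]
  have hd : ∀ t, (P⁻¹.mulVec (Z (x t))) ⬝ᵥ
      (((J (x t) * X₁ * Y (x t)) + (J (x t) * X₁ * Y (x t))ᵀ).mulVec
        (P⁻¹.mulVec (Z (x t)))) ≤ 0 := by
    intro t
    set v := P⁻¹.mulVec (Z (x t)) with hvdef
    set S := (J (x t) * X₁ * Y (x t)) + (J (x t) * X₁ * Y (x t))ᵀ with hSdef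
    have hq := (hQ (x t)).dotProduct_mulVec_nonneg v
    have hstar : star v = v := by
      funext i; simp
    rw [hstar] at hq
    have hexp : (-S - ε (x t) • (1 : Matrix (Fin N) (Fin N) ℝ)).mulVec v
        = -(S.mulVec v) - ε (x t) • v := by
      rw [Matrix.sub_mulVec, Matrix.neg_mulVec, Matrix.smul_mulVec,
        Matrix.one_mulVec]
    rw [hexp, dotProduct_sub, dotProduct_neg,
      dotProduct_smul, smul_eq_mul] at hq
    have hvv : 0 ≤ v ⬝ᵥ v := by
      apply Finset.sum_nonneg
      intro i _
      exact mul_self_nonneg _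
    have := mul_nonneg (hε (x t)) hvv
    linarith
  exact antitone_of_deriv_nonpos
    (fun t => (hV t).differentiableAt)
    (fun t => by rw [(hV t).deriv]; exact hd t)
end

section
/- Under the hypotheses: A an n×N real matrix, B an n×m real matrix, U₀ an m×T real matrix, Z₀ an N×T real matrix, X₁ := A · Z₀ + B · U₀; Z : ℝⁿ → ℝᴺ differentiable with Jacobian J(ξ); P a symmetric positive definite N×N real matrix; Y : ℝⁿ → ℝ^{T×N} with Z₀ · Y(ξ) = P for all ξ; ε : ℝⁿ → ℝ nonnegative; −[J(ξ) X₁ Y(ξ) + (J(ξ) X₁ Y(ξ))ᵀ] − ε(ξ) I_N positive semidefinite for all ξ; and x : ℝ → ℝⁿ differentiable with x'(t) = (A + B F(x(t))) Z(x(t)) where F(ξ) := U₀ Y(ξ) P⁻¹ — the function t ↦ V(x(t)), with V(ξ) := Z(ξ)ᵀ P⁻¹ Z(ξ), is differentiable at every t with derivative at most −ε(x(t)) · ‖P⁻¹ Z(x(t))‖². -/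
open Matrix

set_option maxHeartbeats 1000000 in
/-- Data-driven stabilization (Lyapunov decrease rate).  Under the
hypotheses of the data-driven stabilization theorem, `t ↦ V(x t)` with
`V(ξ) = Z(ξ)ᵀ P⁻¹ Z(ξ)` is differentiable at every `t` with derivative at most
`−ε(x t) ‖P⁻¹ Z(x t)‖²` (Euclidean norm). -/
theorem data_driven_stabilization_lyapunov_decrease_rate
    (n N m T : ℕ)
    (A : Matrix (Fin n) (Fin N) ℝ) (B : Matrix (Fin n) (Fin m) ℝ)
    (U₀ : Matrix (Fin m) (Fin T) ℝ) (Z₀ : Matrix (Fin N) (Fin T) ℝ)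
    (X₁ : Matrix (Fin n) (Fin T) ℝ)
    (hX₁ : X₁ = A * Z₀ + B * U₀)
    (Z : (Fin n → ℝ) → (Fin N → ℝ))
    (hZ : Differentiable ℝ Z)
    (J : (Fin n → ℝ) → Matrix (Fin N) (Fin n) ℝ)
    (hJ : ∀ ξ, J ξ = LinearMap.toMatrix' (fderiv ℝ Z ξ).toLinearMap)
    (P : Matrix (Fin N) (Fin N) ℝ)
    (hP : P.PosDef)
    (Y : (Fin n → ℝ) → Matrix (Fin T) (Fin N) ℝ)
    (hY : ∀ ξ, Z₀ * Y ξ = P)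
    (ε : (Fin n → ℝ) → ℝ)
    (hε : ∀ ξ, 0 ≤ ε ξ)
    (hQ : ∀ ξ, (-(J ξ * X₁ * Y ξ + (J ξ * X₁ * Y ξ)ᵀ)
        - ε ξ • (1 : Matrix (Fin N) (Fin N) ℝ)).PosSemidef)
    (F : (Fin n → ℝ) → Matrix (Fin m) (Fin N) ℝ)
    (hF : ∀ ξ, F ξ = U₀ * Y ξ * P⁻¹)
    (x : ℝ → (Fin n → ℝ))
    (hx : Differentiable ℝ x)
    (hode : ∀ t, deriv x t = (A + B * F (x t)).mulVec (Z (x t)))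
    (t : ℝ) :
    ∃ d : ℝ,
      HasDerivAt (fun s => Z (x s) ⬝ᵥ P⁻¹.mulVec (Z (x s))) d t ∧
      d ≤ -ε (x t) * ‖(WithLp.equiv 2 (Fin N → ℝ)).symm (P⁻¹.mulVec (Z (x t)))‖ ^ 2 := by
  classical
  have hzd : HasDerivAt (fun s => Z (x s)) ((fderiv ℝ Z (x t)) (deriv x t)) t :=
    (hZ (x t)).hasFDerivAt.comp_hasDerivAt t (hx t).hasDerivAt
  set z : Fin N → ℝ := Z (x t) with hzdef
  set v : Fin N → ℝ := (fderiv ℝ Z (x t)) (deriv x t) with hvdef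
  have hzi : ∀ i, HasDerivAt (fun s => Z (x s) i) (v i) t := fun i =>
    (hasDerivAt_pi.mp hzd) i
  set w : Fin N → ℝ := P⁻¹.mulVec z with hwdef
  -- derivative of the quadratic form
  have hderiv : HasDerivAt (fun s => Z (x s) ⬝ᵥ P⁻¹.mulVec (Z (x s)))
      (v ⬝ᵥ P⁻¹.mulVec z + z ⬝ᵥ P⁻¹.mulVec v) t := by
    have h1 : ∀ i j, HasDerivAt (fun s => Z (x s) i * (P⁻¹ i j * Z (x s) j))
        (v i * (P⁻¹ i j * z j) + z i * (P⁻¹ i j * v j)) t := by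
      intro i j
      exact (hzi i).mul ((hzi j).const_mul (P⁻¹ i j))
    have h2 : HasDerivAt (fun s => ∑ i, ∑ j, Z (x s) i * (P⁻¹ i j * Z (x s) j))
        (∑ i, ∑ j, (v i * (P⁻¹ i j * z j) + z i * (P⁻¹ i j * v j))) t :=
      HasDerivAt.fun_sum (fun i _ => HasDerivAt.fun_sum (fun j _ => h1 i j))
    have e1 : (fun s => ∑ i, ∑ j, Z (x s) i * (P⁻¹ i j * Z (x s) j))
        = (fun s => Z (x s) ⬝ᵥ P⁻¹.mulVec (Z (x s))) := by
      funext s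
      simp [dotProduct, Matrix.mulVec, Finset.mul_sum]
    have e2 : (∑ i, ∑ j, (v i * (P⁻¹ i j * z j) + z i * (P⁻¹ i j * v j)))
        = v ⬝ᵥ P⁻¹.mulVec z + z ⬝ᵥ P⁻¹.mulVec v := by
      simp [dotProduct, Matrix.mulVec, Finset.mul_sum, Finset.sum_add_distrib]
    rw [← e1]; rw [← e2]; exact h2
  refine ⟨_, hderiv, ?_⟩
  -- closed-loop identity
  have hPdet : IsUnit P.det := isUnit_iff_ne_zero.mpr hP.det_pos.ne'
  have hPinv : P * P⁻¹ = 1 := Matrix.mul_nonsing_inv P hPdet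
  have hcl : A + B * F (x t) = X₁ * Y (x t) * P⁻¹ := by
    rw [hF, hX₁, Matrix.add_mul, Matrix.add_mul, Matrix.mul_assoc A Z₀ (Y (x t)), hY,
      Matrix.mul_assoc A P P⁻¹, hPinv, Matrix.mul_one]
    congr 1
    simp [Matrix.mul_assoc]
  -- v = (J * X₁ * Y) *ᵥ w
  have hv : v = (J (x t) * X₁ * Y (x t)).mulVec w := by
    have hJv : ∀ u, (J (x t)).mulVec u = (fderiv ℝ Z (x t)) u := by
      intro u
      rw [hJ, ← Matrix.toLin'_apply, Matrix.toLin'_toMatrix']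
      rfl
    calc v = (J (x t)).mulVec (deriv x t) := (hJv _).symm
      _ = (J (x t)).mulVec ((X₁ * Y (x t) * P⁻¹).mulVec z) := by rw [hode, hcl]
      _ = (J (x t) * (X₁ * Y (x t) * P⁻¹)).mulVec z := by rw [Matrix.mulVec_mulVec]
      _ = ((J (x t) * X₁ * Y (x t)) * P⁻¹).mulVec z := by simp [Matrix.mul_assoc]
      _ = (J (x t) * X₁ * Y (x t)).mulVec (P⁻¹.mulVec z) := by rw [Matrix.mulVec_mulVec]
  set M : Matrix (Fin N) (Fin N) ℝ := J (x t) * X₁ * Y (x t) with hMdef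
  -- symmetry of P⁻¹
  have hPsymm : P⁻¹ᵀ = P⁻¹ := by
    have h := hP.isHermitian.inv.eq
    simpa using h
  have hterm2 : z ⬝ᵥ P⁻¹.mulVec v = w ⬝ᵥ M.mulVec w := by
    rw [Matrix.dotProduct_mulVec, ← Matrix.mulVec_transpose, hPsymm, hv]
  have hterm1 : v ⬝ᵥ P⁻¹.mulVec z = (M.mulVec w) ⬝ᵥ w := by
    rw [hv]
  -- quadratic form bound
  have hQw' : 0 ≤ w ⬝ᵥ ((-(M + Mᵀ) - ε (x t) • (1:Matrix (Fin N) (Fin N) ℝ)).mulVec w) := by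
    have h := (hQ (x t)).dotProduct_mulVec_nonneg w
    simpa only [star_trivial] using h
  have hexp : w ⬝ᵥ ((-(M + Mᵀ) - ε (x t) • (1:Matrix (Fin N) (Fin N) ℝ)).mulVec w)
      = -(w ⬝ᵥ M.mulVec w) - (Mᵀ.mulVec w) ⬝ᵥ w - ε (x t) * (w ⬝ᵥ w) := by
    simp [Matrix.sub_mulVec, Matrix.neg_mulVec, Matrix.add_mulVec, Matrix.smul_mulVec,
      dotProduct_sub, dotProduct_neg, dotProduct_add,
      dotProduct_smul, Matrix.one_mulVec, dotProduct_comm (Mᵀ.mulVec w) w,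
      smul_eq_mul]
    ring
  have hMt : (Mᵀ.mulVec w) ⬝ᵥ w = (M.mulVec w) ⬝ᵥ w := by
    rw [Matrix.mulVec_transpose, ← Matrix.dotProduct_mulVec, dotProduct_comm]
  have hnorm : ‖(WithLp.equiv 2 (Fin N → ℝ)).symm w‖ ^ 2 = w ⬝ᵥ w := by
    rw [EuclideanSpace.norm_eq]
    rw [Real.sq_sqrt (by positivity)]
    simp [dotProduct, sq]
  rw [hterm1, hterm2, hnorm]
  have : -(w ⬝ᵥ M.mulVec w) - (M.mulVec w) ⬝ᵥ w - ε (x t) * (w ⬝ᵥ w) ≥ 0 := by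
    rw [← hMt]; rw [← hexp]; exact hQw'
  linarith
end

section
/- Let Z : ℝⁿ → ℝᴺ be differentiable with Jacobian J(ξ) at ξ, let A : ℝⁿ → ℝ^{n×N} and B : ℝⁿ → ℝ^{n×m} be matrix-valued functions, let P be a symmetric positive definite N×N real matrix, let Y : ℝⁿ → ℝ^{m×N}, and let ε : ℝⁿ → ℝ be nonnegative. Assume that for every ξ ∈ ℝⁿ the matrix −[J(ξ)(A(ξ) P + B(ξ) Y(ξ)) + (A(ξ) P + B(ξ) Y(ξ))ᵀ J(ξ)ᵀ] − ε(ξ) I_N is positive semidefinite. Let x : ℝ → ℝⁿ be differentiable and satisfy x'(t) = A(x(t)) Z(x(t)) + B(x(t)) (Y(x(t)) P⁻¹ Z(x(t))) for all t. Then the function t ↦ Z(x(t))ᵀ P⁻¹ Z(x(t)) is nonincreasing on ℝ, and its derivative at each t is at most −ε(x(t)) · ‖P⁻¹ Z(x(t))‖². -/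
open Matrix

lemma hasDerivAt_quadForm {N : ℕ} {g : ℝ → Fin N → ℝ} {g' : Fin N → ℝ} {t : ℝ}
    (M : Matrix (Fin N) (Fin N) ℝ) (hg : HasDerivAt g g' t) :
    HasDerivAt (fun s => g s ⬝ᵥ M.mulVec (g s))
      (g' ⬝ᵥ M.mulVec (g t) + g t ⬝ᵥ M.mulVec g') t := by
  have hgi : ∀ i, HasDerivAt (fun s => g s i) (g' i) t := hasDerivAt_pi.mp hg
  have h1 : ∀ s, g s ⬝ᵥ M.mulVec (g s) = ∑ i, ∑ j, g s i * (M i j * g s j) := by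
    intro s
    simp [dotProduct, Matrix.mulVec, Finset.mul_sum]
  have h2 : g' ⬝ᵥ M.mulVec (g t) + g t ⬝ᵥ M.mulVec g'
      = ∑ i, ∑ j, (g' i * (M i j * g t j) + g t i * (M i j * g' j)) := by
    simp [dotProduct, Matrix.mulVec, Finset.mul_sum, Finset.sum_add_distrib]
  simp only [h1, h2]
  apply HasDerivAt.fun_sum
  intro i _
  apply HasDerivAt.fun_sum
  intro j _
  exact (hgi i).mul ((hgi j).const_mul (M i j))


/-- Model-based SOS stabilization (Proposition 2).  For the
polynomial system `ẋ = A(x) Z(x) + B(x) u` with controller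
`u = Y(x) P⁻¹ Z(x)`, if
`−[J(ξ)(A(ξ)P + B(ξ)Y(ξ)) + (A(ξ)P + B(ξ)Y(ξ))ᵀ J(ξ)ᵀ] − ε(ξ) I_N ⪰ 0` for all
`ξ` (with `ε ≥ 0`, `P` symmetric positive definite, `J` the Jacobian of `Z`),
then along every differentiable closed-loop trajectory the Lyapunov function
`t ↦ Z(x t)ᵀ P⁻¹ Z(x t)` is nonincreasing, with derivative at each `t` at most
`−ε(x t) ‖P⁻¹ Z(x t)‖²`. -/
theorem model_based_sos_stabilization
    (n N m : ℕ)
    (Z : (Fin n → ℝ) → (Fin N → ℝ))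
    (hZ : Differentiable ℝ Z)
    (J : (Fin n → ℝ) → Matrix (Fin N) (Fin n) ℝ)
    (hJ : ∀ ξ, J ξ = LinearMap.toMatrix' (fderiv ℝ Z ξ).toLinearMap)
    (A : (Fin n → ℝ) → Matrix (Fin n) (Fin N) ℝ)
    (B : (Fin n → ℝ) → Matrix (Fin n) (Fin m) ℝ)
    (P : Matrix (Fin N) (Fin N) ℝ)
    (hP : P.PosDef)
    (Y : (Fin n → ℝ) → Matrix (Fin m) (Fin N) ℝ)
    (ε : (Fin n → ℝ) → ℝ)
    (hε : ∀ ξ, 0 ≤ ε ξ)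
    (hQ : ∀ ξ, (-(J ξ * (A ξ * P + B ξ * Y ξ) + (A ξ * P + B ξ * Y ξ)ᵀ * (J ξ)ᵀ)
        - ε ξ • (1 : Matrix (Fin N) (Fin N) ℝ)).PosSemidef)
    (x : ℝ → (Fin n → ℝ))
    (hx : Differentiable ℝ x)
    (hode : ∀ t, deriv x t
      = (A (x t)).mulVec (Z (x t))
        + (B (x t)).mulVec ((Y (x t) * P⁻¹).mulVec (Z (x t)))) :
    Antitone (fun t => Z (x t) ⬝ᵥ P⁻¹.mulVec (Z (x t))) ∧
    ∀ t : ℝ, ∃ d : ℝ,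
      HasDerivAt (fun s => Z (x s) ⬝ᵥ P⁻¹.mulVec (Z (x s))) d t ∧
      d ≤ -ε (x t) * ‖(WithLp.equiv 2 (Fin N → ℝ)).symm (P⁻¹.mulVec (Z (x t)))‖ ^ 2 := by
  -- basic facts about P
  have hPdet : IsUnit P.det := isUnit_iff_ne_zero.mpr (ne_of_gt hP.det_pos)
  have hPP : P * P⁻¹ = 1 := Matrix.mul_nonsing_inv P hPdet
  have hPinvT : P⁻¹ᵀ = P⁻¹ := by
    rw [Matrix.transpose_nonsing_inv]
    congr 1
    have := hP.1
    rw [Matrix.IsHermitian] at this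
    exact (Matrix.conjTranspose_eq_transpose_of_trivial P).symm.trans this
  -- derivative of Z ∘ x
  set f : ℝ → Fin N → ℝ := fun s => Z (x s) with hf_def
  have hfd : ∀ t, HasDerivAt f ((J (x t)).mulVec (deriv x t)) t := by
    intro t
    have h := ((hZ (x t)).hasFDerivAt).comp_hasDerivAt t (hx t).hasDerivAt
    have heq : (fderiv ℝ Z (x t)) (deriv x t) = (J (x t)).mulVec (deriv x t) := by
      rw [hJ, ← Matrix.toLin'_apply, Matrix.toLin'_toMatrix']
      rfl
    rw [← heq]
    exact h
  -- derivative of the Lyapunov function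
  set D : ℝ → ℝ := fun t => (J (x t)).mulVec (deriv x t) ⬝ᵥ P⁻¹.mulVec (f t)
      + f t ⬝ᵥ P⁻¹.mulVec ((J (x t)).mulVec (deriv x t)) with hD_def
  have hVd : ∀ t, HasDerivAt (fun s => Z (x s) ⬝ᵥ P⁻¹.mulVec (Z (x s))) (D t) t := by
    intro t
    exact hasDerivAt_quadForm P⁻¹ (hfd t)
  -- bound the derivative
  have hbound : ∀ t, D t ≤ -ε (x t) * ‖(WithLp.equiv 2 (Fin N → ℝ)).symm (P⁻¹.mulVec (Z (x t)))‖ ^ 2 := by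
    intro t
    set ξ := x t
    set z : Fin N → ℝ := Z ξ with hz_def
    set w : Fin N → ℝ := P⁻¹.mulVec z with hw_def
    set M : Matrix (Fin n) (Fin N) ℝ := A ξ * P + B ξ * Y ξ with hM_def
    have hz_eq : P.mulVec w = z := by
      rw [hw_def, Matrix.mulVec_mulVec, hPP, Matrix.one_mulVec]
    -- velocity in terms of w
    have hv : deriv x t = M.mulVec w := by
      rw [hode t]
      rw [hM_def, Matrix.add_mulVec]
      congr 1
      · rw [← Matrix.mulVec_mulVec, hz_eq]
      · rw [hw_def, Matrix.mulVec_mulVec, Matrix.mulVec_mulVec, Matrix.mul_assoc]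
    have hJv : (J ξ).mulVec (deriv x t) = (J ξ * M).mulVec w := by
      rw [hv, Matrix.mulVec_mulVec]
    -- scalar identities
    have hsym : ∀ (C : Matrix (Fin N) (Fin N) ℝ) (u : Fin N → ℝ),
        u ⬝ᵥ Cᵀ.mulVec u = u ⬝ᵥ C.mulVec u := by
      intro C u
      rw [Matrix.dotProduct_mulVec, Matrix.vecMul_transpose, dotProduct_comm]
    have h1 : (J ξ * M).mulVec w ⬝ᵥ P⁻¹.mulVec z = w ⬝ᵥ (J ξ * M).mulVec w := by
      rw [← hw_def, dotProduct_comm]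
    have h2 : z ⬝ᵥ P⁻¹.mulVec ((J ξ * M).mulVec w) = w ⬝ᵥ (J ξ * M).mulVec w := by
      rw [Matrix.dotProduct_mulVec]
      congr 1
      rw [← Matrix.mulVec_transpose, hPinvT, ← hw_def]
    have hD_eq : D t = 2 * (w ⬝ᵥ (J ξ * M).mulVec w) := by
      rw [hD_def]
      simp only []
      rw [hJv]
      show (J ξ * M).mulVec w ⬝ᵥ P⁻¹.mulVec z + z ⬝ᵥ P⁻¹.mulVec ((J ξ * M).mulVec w)
        = 2 * (w ⬝ᵥ (J ξ * M).mulVec w)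
      rw [h1, h2]; ring
    -- the quadratic form bound from hQ
    have hQw := (hQ ξ).dotProduct_mulVec_nonneg w
    have hQw' : 0 ≤ w ⬝ᵥ (-(J ξ * M + Mᵀ * (J ξ)ᵀ) - ε ξ • (1 : Matrix (Fin N) (Fin N) ℝ)).mulVec w := by
      simpa [hM_def] using hQw
    have hexp : w ⬝ᵥ (-(J ξ * M + Mᵀ * (J ξ)ᵀ) - ε ξ • (1 : Matrix (Fin N) (Fin N) ℝ)).mulVec w
        = -(w ⬝ᵥ (J ξ * M).mulVec w + w ⬝ᵥ (Mᵀ * (J ξ)ᵀ).mulVec w) - ε ξ * (w ⬝ᵥ w) := by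
      rw [Matrix.sub_mulVec, Matrix.neg_mulVec, Matrix.add_mulVec]
      rw [dotProduct_sub, dotProduct_neg, dotProduct_add]
      rw [Matrix.smul_mulVec, Matrix.one_mulVec, dotProduct_smul]
      simp [smul_eq_mul]
    have hMJ : w ⬝ᵥ (Mᵀ * (J ξ)ᵀ).mulVec w = w ⬝ᵥ (J ξ * M).mulVec w := by
      have : Mᵀ * (J ξ)ᵀ = (J ξ * M)ᵀ := by rw [Matrix.transpose_mul]
      rw [this, hsym]
    have hkey : 2 * (w ⬝ᵥ (J ξ * M).mulVec w) ≤ -(ε ξ * (w ⬝ᵥ w)) := by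
      rw [hexp, hMJ] at hQw'
      linarith
    -- the norm identity
    have hnorm : ‖(WithLp.equiv 2 (Fin N → ℝ)).symm w‖ ^ 2 = w ⬝ᵥ w := by
      rw [EuclideanSpace.norm_eq]
      rw [Real.sq_sqrt (by positivity)]
      simp [dotProduct, Real.norm_eq_abs, sq_abs, pow_two]
    rw [hD_eq]
    calc 2 * (w ⬝ᵥ (J ξ * M).mulVec w) ≤ -(ε ξ * (w ⬝ᵥ w)) := hkey
      _ = -ε ξ * ‖(WithLp.equiv 2 (Fin N → ℝ)).symm w‖ ^ 2 := by rw [hnorm]; ring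
  constructor
  · apply antitone_of_deriv_nonpos
    · exact fun t => (hVd t).differentiableAt
    · intro t
      rw [(hVd t).deriv]
      refine le_trans (hbound t) ?_
      have := hε (x t)
      have hn : (0:ℝ) ≤ ‖(WithLp.equiv 2 (Fin N → ℝ)).symm (P⁻¹.mulVec (Z (x t)))‖ ^ 2 := by positivity
      nlinarith
  · intro t
    exact ⟨D t, hVd t, hbound t⟩
end

section
/- Let V : ℝⁿ → ℝ be continuous with V(0) = 0 and V(ξ) > 0 for all ξ ≠ 0, and suppose V is radially unbounded: V(ξ) → ∞ as ‖ξ‖ → ∞. Let W : ℝⁿ → ℝ be continuous with W(ξ) > 0 for all ξ ≠ 0. Let x : [0,∞) → ℝⁿ be differentiable such that for every t ≥ 0 the function V ∘ x is differentiable at t with (V ∘ x)'(t) ≤ −W(x(t)). Then x(t) → 0 as t → ∞. -/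
open Filter

lemma aux_antitone_of_deriv_nonpos {f : ℝ → ℝ}
    (h : ∀ t ∈ Set.Ici (0:ℝ), ∃ d, HasDerivAt f d t ∧ d ≤ 0) :
    AntitoneOn f (Set.Ici 0) := by
  apply antitoneOn_of_deriv_nonpos (convex_Ici 0)
  · intro t ht
    obtain ⟨d, hd, _⟩ := h t ht
    exact hd.differentiableAt.continuousAt.continuousWithinAt
  · intro t ht
    rw [interior_Ici] at ht
    obtain ⟨d, hd, _⟩ := h t (Set.mem_Ici.mpr (le_of_lt (Set.mem_Ioi.mp ht)))
    exact hd.differentiableAt.differentiableWithinAt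
  · intro t ht
    rw [interior_Ici] at ht
    obtain ⟨d, hd, hle⟩ := h t (Set.mem_Ici.mpr (le_of_lt (Set.mem_Ioi.mp ht)))
    rw [hd.deriv]; exact hle

/-- Lyapunov convergence argument.  If `V` is continuous, positive
definite (`V 0 = 0`, `V ξ > 0` for `ξ ≠ 0`) and radially unbounded, `W` is
continuous and positive away from the origin, and along the differentiable
trajectory `x` the function `V ∘ x` is differentiable at every `t ≥ 0` with
derivative at most `−W(x t)`, then `x t → 0` as `t → ∞`. -/
theorem lyapunov_global_asymptotic_convergence
    (n : ℕ)
    (V : (Fin n → ℝ) → ℝ)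
    (hVcont : Continuous V)
    (hV0 : V 0 = 0)
    (hVpos : ∀ ξ : Fin n → ℝ, ξ ≠ 0 → 0 < V ξ)
    (hVradial : Tendsto V (comap (fun ξ : Fin n → ℝ => ‖ξ‖) atTop) atTop)
    (W : (Fin n → ℝ) → ℝ)
    (hWcont : Continuous W)
    (hWpos : ∀ ξ : Fin n → ℝ, ξ ≠ 0 → 0 < W ξ)
    (x : ℝ → (Fin n → ℝ))
    (hx : ∀ t : ℝ, 0 ≤ t → DifferentiableAt ℝ x t)
    (hdecr : ∀ t : ℝ, 0 ≤ t → ∃ d : ℝ,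
      HasDerivAt (fun s => V (x s)) d t ∧ d ≤ -W (x t)) :
    Tendsto x atTop (nhds 0) := by
  rcases Nat.eq_zero_or_pos n with hn | hn
  · subst hn
    have : x = fun _ => 0 := funext fun t => Subsingleton.elim _ _
    rw [this]; exact tendsto_const_nhds
  haveI : Nonempty (Fin n) := Fin.pos_iff_nonempty.mp hn
  haveI : Nontrivial (Fin n → ℝ) := inferInstance
  have hWnn : ∀ ξ, 0 ≤ W ξ := by
    intro ξ; rcases eq_or_ne ξ 0 with rfl | h
    · have htend : Tendsto W (nhdsWithin (0 : Fin n → ℝ) {0}ᶜ) (nhds (W 0)) :=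
        hWcont.continuousAt.mono_left nhdsWithin_le_nhds
      refine ge_of_tendsto htend ?_
      filter_upwards [self_mem_nhdsWithin] with ξ hξ
      exact (hWpos ξ hξ).le
    · exact (hWpos ξ h).le
  set v : ℝ → ℝ := fun t => V (x t) with hv
  have hvmono : AntitoneOn v (Set.Ici 0) := by
    apply aux_antitone_of_deriv_nonpos
    intro t ht
    obtain ⟨d, hd, hle⟩ := hdecr t ht
    exact ⟨d, hd, hle.trans (neg_nonpos.mpr (hWnn _))⟩
  set c := v 0 with hc
  -- radial bound
  obtain ⟨R, hR⟩ : ∃ R : ℝ, ∀ ξ : Fin n → ℝ, R ≤ ‖ξ‖ → c < V ξ := by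
    have h1 := hVradial.eventually (eventually_gt_atTop c)
    rw [eventually_comap] at h1
    rw [eventually_atTop] at h1
    obtain ⟨R, hR⟩ := h1
    exact ⟨R, fun ξ hξ => hR ‖ξ‖ hξ ξ rfl⟩
  have hxR : ∀ t, 0 ≤ t → ‖x t‖ ≤ R := by
    intro t ht
    by_contra hcon; push_neg at hcon
    have h1 : c < v t := hR (x t) hcon.le
    have h2 : v t ≤ v 0 := hvmono Set.self_mem_Ici ht ht
    linarith
  -- key claim: v gets below any positive level
  have key : ∀ δ : ℝ, 0 < δ → ∃ T, 0 ≤ T ∧ v T < δ := by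
    intro δ hδ
    by_contra hcon; push_neg at hcon
    have hlev : ∀ T : ℝ, 0 ≤ T → δ ≤ v T := fun T hT => hcon T hT
    set K : Set (Fin n → ℝ) := {ξ | ‖ξ‖ ≤ R ∧ δ ≤ V ξ} with hK
    have hKc : IsCompact K := by
      have hKeq : K = Metric.closedBall 0 R ∩ V ⁻¹' (Set.Ici δ) := by
        ext ξ
        simp [hK, Metric.mem_closedBall, dist_zero_right]
      rw [hKeq]
      exact (isCompact_closedBall 0 R).inter_right (isClosed_Ici.preimage hVcont)
    have hKne : K.Nonempty := ⟨x 0, hxR 0 le_rfl, hlev 0 le_rfl⟩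
    obtain ⟨ξ₀, hξ₀K, hmin⟩ := hKc.exists_isMinOn hKne hWcont.continuousOn
    set m := W ξ₀ with hm
    have hmpos : 0 < m := by
      refine hWpos ξ₀ fun h0 => ?_
      have := hξ₀K.2
      rw [h0, hV0] at this
      linarith
    have hmem : ∀ t, 0 ≤ t → x t ∈ K := fun t ht => ⟨hxR t ht, hlev t ht⟩
    have hW' : ∀ t : ℝ, 0 ≤ t → m ≤ W (x t) := fun t ht => hmin (hmem t ht)
    have hg : AntitoneOn (fun t => v t + m * t) (Set.Ici 0) := by
      apply aux_antitone_of_deriv_nonpos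
      intro t ht
      obtain ⟨d, hd, hle⟩ := hdecr t ht
      refine ⟨d + m, hd.add (by simpa using (hasDerivAt_id t).const_mul m), ?_⟩
      have := hW' t ht
      linarith
    set T : ℝ := (c - δ) / m + 1 with hT
    have hcδ : δ ≤ c := hlev 0 le_rfl
    have hT0 : 0 ≤ T := by
      have : 0 ≤ (c - δ) / m := div_nonneg (by linarith) hmpos.le
      simp only [hT]; linarith
    have h1 : v T + m * T ≤ v 0 + m * 0 := hg Set.self_mem_Ici hT0 hT0
    have h2 : δ ≤ v T := hlev T hT0
    have h3 : m * T = (c - δ) + m := by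
      rw [hT, mul_add, mul_one]; congr 1; field_simp [hmpos.ne']
    nlinarith
  -- conclusion
  rw [Metric.tendsto_atTop]
  intro ε hε
  set K' : Set (Fin n → ℝ) := {ξ | ε ≤ ‖ξ‖ ∧ ‖ξ‖ ≤ R} with hK'
  by_cases hK'ne : K'.Nonempty
  · have hK'c : IsCompact K' := by
      have hKeq : K' = Metric.closedBall 0 R ∩ (fun ξ : Fin n → ℝ => ‖ξ‖) ⁻¹' (Set.Ici ε) := by
        ext ξ
        simp only [hK', Set.mem_setOf_eq, Set.mem_inter_iff, Metric.mem_closedBall,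
          dist_zero_right, Set.mem_preimage, Set.mem_Ici]
        tauto
      rw [hKeq]
      exact (isCompact_closedBall 0 R).inter_right (isClosed_Ici.preimage continuous_norm)
    obtain ⟨ξ₀, hξ₀, hmin⟩ := hK'c.exists_isMinOn hK'ne hVcont.continuousOn
    have hδ : 0 < V ξ₀ := by
      refine hVpos ξ₀ fun h0 => ?_
      have := hξ₀.1
      rw [h0, norm_zero] at this
      linarith
    obtain ⟨T, hT0, hTlt⟩ := key (V ξ₀) hδ
    refine ⟨T, fun t ht => ?_⟩
    have ht0 : (0:ℝ) ≤ t := le_trans hT0 ht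
    have h1 : v t ≤ v T := hvmono hT0 ht0 ht
    have h2 : V (x t) < V ξ₀ := lt_of_le_of_lt h1 hTlt
    have hnot : x t ∉ K' := fun hmem => absurd (hmin hmem) (not_le.mpr h2)
    rw [dist_zero_right]
    by_contra hcon; push_neg at hcon
    exact hnot ⟨hcon, hxR t ht0⟩
  · refine ⟨0, fun t ht => ?_⟩
    rw [dist_zero_right]
    by_contra hcon; push_neg at hcon
    exact hK'ne ⟨x t, hcon, hxR t ht⟩
end
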